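/- Under the refinement setting with Z = T(U), if there exists a state z with P(Z=z) > 0 such that the refinement splits {Z=z} across the Bayes boundary — i.e., there exist u₁, u₂ in the preimage of z with P(U=u₁) > 0, P(U=u₂) > 0, η_BL(u₁) < 1/2 < η_BL(u₂) — then the refinement inequality is strict: E[min(η_BL(U), 1-η_BL(U))] < E[min(η_B(Z), 1-η_B(Z))]. -/
import Mathlib
open Finset

lemma key_lem {𝒰 𝒵 : Type*} [Fintype 𝒰] [Fintype 𝒵] [DecidableEq 𝒵]
    (w a : 𝒰 → ℝ) (T : 𝒰 → 𝒵) (η : 𝒰 → ℝ) (ηB : 𝒵 → ℝ)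
    (hw : ∀ u, 0 ≤ w u) (hwa : ∀ u, w u * η u = a u)
    (hWA : ∀ z', (∑ u ∈ univ.filter (fun u => T u = z'), w u) * ηB z'
        = ∑ u ∈ univ.filter (fun u => T u = z'), a u)
    (z : 𝒵) (u₁ u₂ : 𝒰) (h1 : T u₁ = z) (h2 : T u₂ = z)
    (hw1 : 0 < w u₁) (hw2 : 0 < w u₂) (hη1 : η u₁ < 1/2) (hη2 : 1/2 < η u₂) :
    ∑ u, w u * min (η u) (1 - η u)
      < ∑ z', (∑ u ∈ univ.filter (fun u => T u = z'), w u) * min (ηB z') (1 - ηB z') := by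
  rw [← Finset.sum_fiberwise univ T (fun u => w u * min (η u) (1 - η u))]
  have hmin : ∀ z', (∑ u ∈ univ.filter (fun u => T u = z'), w u) * min (ηB z') (1 - ηB z')
      = min (∑ u ∈ univ.filter (fun u => T u = z'), w u * η u)
            (∑ u ∈ univ.filter (fun u => T u = z'), w u * (1 - η u)) := by
    intro z'
    have hWnn : 0 ≤ ∑ u ∈ univ.filter (fun u => T u = z'), w u :=
      Finset.sum_nonneg fun u _ => hw u
    have e1 : ∑ u ∈ univ.filter (fun u => T u = z'), w u * η u
        = (∑ u ∈ univ.filter (fun u => T u = z'), w u) * ηB z' := by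
      rw [hWA z']; exact Finset.sum_congr rfl fun u _ => hwa u
    have e2 : ∑ u ∈ univ.filter (fun u => T u = z'), w u * (1 - η u)
        = (∑ u ∈ univ.filter (fun u => T u = z'), w u) * (1 - ηB z') := by
      have : ∀ u, w u * (1 - η u) = w u - w u * η u := fun u => by ring
      simp only [this, Finset.sum_sub_distrib, e1]
      ring
    rw [e1, e2, mul_min_of_nonneg _ _ hWnn]
  apply Finset.sum_lt_sum
  · intro z' _
    rw [hmin z']
    refine le_min (Finset.sum_le_sum ?_) (Finset.sum_le_sum ?_)
    · exact fun u _ => mul_le_mul_of_nonneg_left (min_le_left _ _) (hw u)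
    · exact fun u _ => mul_le_mul_of_nonneg_left (min_le_right _ _) (hw u)
  · refine ⟨z, mem_univ z, ?_⟩
    rw [hmin z]
    rcases min_cases (∑ u ∈ univ.filter (fun u => T u = z), w u * η u)
      (∑ u ∈ univ.filter (fun u => T u = z), w u * (1 - η u)) with ⟨hEq, _⟩ | ⟨hEq, _⟩
    · rw [hEq]
      apply Finset.sum_lt_sum
      · exact fun u _ => mul_le_mul_of_nonneg_left (min_le_left _ _) (hw u)
      · refine ⟨u₂, Finset.mem_filter.2 ⟨mem_univ _, h2⟩, ?_⟩
        have : min (η u₂) (1 - η u₂) = 1 - η u₂ := min_eq_right (by linarith)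
        rw [this]
        exact mul_lt_mul_of_pos_left (by linarith) hw2
    · rw [hEq]
      apply Finset.sum_lt_sum
      · exact fun u _ => mul_le_mul_of_nonneg_left (min_le_right _ _) (hw u)
      · refine ⟨u₁, Finset.mem_filter.2 ⟨mem_univ _, h1⟩, ?_⟩
        have : min (η u₁) (1 - η u₁) = η u₁ := min_eq_left (by linarith)
        rw [this]
        exact mul_lt_mul_of_pos_left (by linarith) hw1

/-- Strict refinement inequality: if some broad state z is split by the refinement across
the Bayes boundary 1/2, the refined Bayes 0-1 risk is strictly smaller than the coarse one. -/
theorem stmt3 {Ω 𝒰 𝒵 : Type*} [Fintype Ω] [Fintype 𝒰] [Fintype 𝒵]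
    [DecidableEq 𝒰] [DecidableEq 𝒵]
    (P : Ω → ℝ) (hP : ∀ ω, 0 ≤ P ω) (hP1 : ∑ ω, P ω = 1)
    (Y : Ω → Bool) (U : Ω → 𝒰) (T : 𝒰 → 𝒵) (Z : Ω → 𝒵) (hZ : Z = T ∘ U)
    (ηBL : 𝒰 → ℝ)
    (hηBL : ∀ u, ηBL u =
      (∑ ω ∈ univ.filter (fun ω => U ω = u ∧ Y ω = true), P ω)
        / (∑ ω ∈ univ.filter (fun ω => U ω = u), P ω))
    (ηB : 𝒵 → ℝ)
    (hηB : ∀ z, ηB z =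
      (∑ ω ∈ univ.filter (fun ω => Z ω = z ∧ Y ω = true), P ω)
        / (∑ ω ∈ univ.filter (fun ω => Z ω = z), P ω))
    (z : 𝒵) (hzpos : 0 < ∑ ω ∈ univ.filter (fun ω => Z ω = z), P ω)
    (u₁ u₂ : 𝒰) (hu₁z : T u₁ = z) (hu₂z : T u₂ = z)
    (hu₁pos : 0 < ∑ ω ∈ univ.filter (fun ω => U ω = u₁), P ω)
    (hu₂pos : 0 < ∑ ω ∈ univ.filter (fun ω => U ω = u₂), P ω)
    (hsplit : ηBL u₁ < 1/2 ∧ 1/2 < ηBL u₂) :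
    ∑ ω, P ω * min (ηBL (U ω)) (1 - ηBL (U ω))
      < ∑ ω, P ω * min (ηB (Z ω)) (1 - ηB (Z ω)) := by
  obtain ⟨hs1, hs2⟩ := hsplit
  subst hZ
  -- weights
  set w : 𝒰 → ℝ := fun u => ∑ ω ∈ univ.filter (fun ω => U ω = u), P ω with hwdef
  set a : 𝒰 → ℝ := fun u => ∑ ω ∈ univ.filter (fun ω => U ω = u ∧ Y ω = true), P ω with hadef
  have hwnn : ∀ u, 0 ≤ w u := fun u => Finset.sum_nonneg fun ω _ => hP ω
  have hann : ∀ u, 0 ≤ a u := fun u => Finset.sum_nonneg fun ω _ => hP ω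
  have haw : ∀ u, a u ≤ w u := by
    intro u
    apply Finset.sum_le_sum_of_subset_of_nonneg
    · intro ω hω
      simp only [Finset.mem_filter] at hω ⊢
      exact ⟨hω.1, hω.2.1⟩
    · exact fun ω _ _ => hP ω
  have hwa : ∀ u, w u * ηBL u = a u := by
    intro u
    rw [hηBL u]
    by_cases h : w u = 0
    · have ha0 : a u = 0 := le_antisymm (h ▸ haw u) (hann u)
      rw [show (∑ ω ∈ univ.filter (fun ω => U ω = u ∧ Y ω = true), P ω) = a u from rfl,
        show (∑ ω ∈ univ.filter (fun ω => U ω = u), P ω) = w u from rfl, h, ha0]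
      simp
    · rw [show (∑ ω ∈ univ.filter (fun ω => U ω = u ∧ Y ω = true), P ω) = a u from rfl,
        show (∑ ω ∈ univ.filter (fun ω => U ω = u), P ω) = w u from rfl]
      field_simp
  -- fiber decomposition of coarse weights
  have hW : ∀ z', (∑ ω ∈ univ.filter (fun ω => (T ∘ U) ω = z'), P ω)
      = ∑ u ∈ univ.filter (fun u => T u = z'), w u := by
    intro z'
    rw [← Finset.sum_fiberwise (univ.filter fun ω => (T ∘ U) ω = z') U P,
      Finset.sum_filter]
    apply Finset.sum_congr rfl
    intro u _
    by_cases h : T u = z'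
    · rw [if_pos h]
      apply Finset.sum_congr _ (fun _ _ => rfl)
      ext ω
      simp only [Finset.mem_filter, Finset.mem_univ, true_and, Function.comp_apply]
      constructor
      · exact fun hh => hh.2
      · exact fun hh => ⟨by rw [hh, h], hh⟩
    · rw [if_neg h]
      apply Finset.sum_eq_zero
      intro ω hω
      simp only [Finset.mem_filter, Finset.mem_univ, true_and, Function.comp_apply] at hω
      exact absurd (by rw [← hω.2]; exact hω.1) h
  have hA : ∀ z', (∑ ω ∈ univ.filter (fun ω => (T ∘ U) ω = z' ∧ Y ω = true), P ω)
      = ∑ u ∈ univ.filter (fun u => T u = z'), a u := by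
    intro z'
    rw [← Finset.sum_fiberwise (univ.filter fun ω => (T ∘ U) ω = z' ∧ Y ω = true) U P,
      Finset.sum_filter]
    apply Finset.sum_congr rfl
    intro u _
    by_cases h : T u = z'
    · rw [if_pos h]
      apply Finset.sum_congr _ (fun _ _ => rfl)
      ext ω
      simp only [Finset.mem_filter, Finset.mem_univ, true_and, Function.comp_apply]
      constructor
      · exact fun hh => ⟨hh.2, hh.1.2⟩
      · exact fun hh => ⟨⟨by rw [hh.1, h], hh.2⟩, hh.1⟩
    · rw [if_neg h]
      apply Finset.sum_eq_zero
      intro ω hω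
      simp only [Finset.mem_filter, Finset.mem_univ, true_and, Function.comp_apply] at hω
      exact absurd (by rw [← hω.2]; exact hω.1.1) h
  have hWA : ∀ z', (∑ u ∈ univ.filter (fun u => T u = z'), w u) * ηB z'
      = ∑ u ∈ univ.filter (fun u => T u = z'), a u := by
    intro z'
    rw [hηB z', ← hW z', ← hA z']
    by_cases h : (∑ ω ∈ univ.filter (fun ω => (T ∘ U) ω = z'), P ω) = 0
    · have hAle : (∑ ω ∈ univ.filter (fun ω => (T ∘ U) ω = z' ∧ Y ω = true), P ω)
          ≤ ∑ ω ∈ univ.filter (fun ω => (T ∘ U) ω = z'), P ω := by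
        apply Finset.sum_le_sum_of_subset_of_nonneg
        · intro ω hω
          simp only [Finset.mem_filter] at hω ⊢
          exact ⟨hω.1, hω.2.1⟩
        · exact fun ω _ _ => hP ω
      have hA0 : (∑ ω ∈ univ.filter (fun ω => (T ∘ U) ω = z' ∧ Y ω = true), P ω) = 0 :=
        le_antisymm (h ▸ hAle) (Finset.sum_nonneg fun ω _ => hP ω)
      rw [h, hA0]; simp
    · rw [mul_comm, div_mul_cancel₀ _ h]
  -- rewrite both sides as sums over 𝒰 / 𝒵
  have hLHS : ∑ ω, P ω * min (ηBL (U ω)) (1 - ηBL (U ω))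
      = ∑ u, w u * min (ηBL u) (1 - ηBL u) := by
    rw [← Finset.sum_fiberwise univ U (fun ω => P ω * min (ηBL (U ω)) (1 - ηBL (U ω)))]
    apply Finset.sum_congr rfl
    intro u _
    rw [hwdef, Finset.sum_mul]
    apply Finset.sum_congr rfl
    intro ω hω
    simp only [Finset.mem_filter] at hω
    rw [hω.2]
  have hRHS : ∑ ω, P ω * min (ηB ((T ∘ U) ω)) (1 - ηB ((T ∘ U) ω))
      = ∑ z', (∑ u ∈ univ.filter (fun u => T u = z'), w u) * min (ηB z') (1 - ηB z') := by
    rw [← Finset.sum_fiberwise univ (T ∘ U)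
      (fun ω => P ω * min (ηB ((T ∘ U) ω)) (1 - ηB ((T ∘ U) ω)))]
    apply Finset.sum_congr rfl
    intro z' _
    rw [← hW z', Finset.sum_mul]
    apply Finset.sum_congr rfl
    intro ω hω
    simp only [Finset.mem_filter] at hω
    rw [hω.2]
  rw [hLHS, hRHS]
  exact key_lem w a T ηBL ηB hwnn hwa hWA z u₁ u₂ hu₁z hu₂z hu₁pos hu₂pos hs1 hs2
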